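/- Let r ∈ ℝ with r ≥ 0, let λ ∈ ℝⁿ have all entries positive, and let x ∈ ℝⁿ. Then −J(x)ᵀ is an irreducible M-matrix satisfying −J(x)ᵀ λ = r λ (so that r is its Perron root and λ a Perron vector) if and only if h(λ) is positive definite (i.e. λ ∈ Λ) and x = (1/2) h(λ)⁻¹ [λ] (I_L^* + r·1). In that case x has all entries positive. -/

import Mathlib

open Matrix Set

noncomputable section

/-- `A` is irreducible: for every nonempty proper subset `α` of the index set,
the submatrix `A[α, αᶜ]` is not the zero matrix. -/
def IsIrred {k : ℕ} (A : Matrix (Fin k) (Fin k) ℝ) : Prop :=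
  ∀ α : Finset (Fin k), α.Nonempty → α ≠ Finset.univ → ∃ i ∈ α, ∃ j ∈ αᶜ, A i j ≠ 0

/-- `A` is a Z-matrix: off-diagonal entries are nonpositive. -/
def IsZmat {k : ℕ} (A : Matrix (Fin k) (Fin k) ℝ) : Prop :=
  ∀ i j, i ≠ j → A i j ≤ 0

/-- `A` is an M-matrix: a Z-matrix all of whose eigenvalues have nonnegative real part. -/
def IsMmat {k : ℕ} (A : Matrix (Fin k) (Fin k) ℝ) : Prop :=
  IsZmat A ∧ ∀ μ ∈ spectrum ℂ (A.map (Complex.ofReal)), 0 ≤ μ.re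

/-- `A` is a nonsingular M-matrix: a Z-matrix all of whose eigenvalues have positive real part. -/
def IsNonsingMmat {k : ℕ} (A : Matrix (Fin k) (Fin k) ℝ) : Prop :=
  IsZmat A ∧ ∀ μ ∈ spectrum ℂ (A.map (Complex.ofReal)), 0 < μ.re

/-- `P_c(x) = [x] Y (V* − x)`. -/
def Pc {k : ℕ} (Y : Matrix (Fin k) (Fin k) ℝ) (Vs : Fin k → ℝ) (x : Fin k → ℝ) : Fin k → ℝ :=
  Matrix.diagonal x *ᵥ (Y *ᵥ (Vs - x))

/-- Jacobian of `P_c` at `x`: `J(x) = [Y(V* − x)] − [x] Y`. -/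
def Jmat {k : ℕ} (Y : Matrix (Fin k) (Fin k) ℝ) (Vs : Fin k → ℝ) (x : Fin k → ℝ) :
    Matrix (Fin k) (Fin k) ℝ :=
  Matrix.diagonal (Y *ᵥ (Vs - x)) - Matrix.diagonal x * Y

/-- long-term voltage stable operating points. -/
def Dset {k : ℕ} (Y : Matrix (Fin k) (Fin k) ℝ) (Vs : Fin k → ℝ) : Set (Fin k → ℝ) :=
  {x | (∀ i, 0 < x i) ∧ IsUnit (Jmat Y Vs x).det ∧ ∀ i j, (Jmat Y Vs x)⁻¹ i j < 0}

/-- feasible power demands. -/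
def Fset {k : ℕ} (Y : Matrix (Fin k) (Fin k) ℝ) (Vs : Fin k → ℝ) : Set (Fin k → ℝ) :=
  {P | ∃ x, (∀ i, 0 < x i) ∧ Pc Y Vs x = P}

/-- `h(λ) = (1/2)([λ] Y + Y [λ])`. -/
def hmat {k : ℕ} (Y : Matrix (Fin k) (Fin k) ℝ) (l : Fin k → ℝ) : Matrix (Fin k) (Fin k) ℝ :=
  (1/2 : ℝ) • (Matrix.diagonal l * Y + Y * Matrix.diagonal l)

/-- `Λ₁ = {λ ∈ Λ : λ > 0, 1ᵀλ = 1}`. -/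
def Lam1 {k : ℕ} (Y : Matrix (Fin k) (Fin k) ℝ) : Set (Fin k → ℝ) :=
  {l | (hmat Y l).PosDef ∧ (∀ i, 0 < l i) ∧ ∑ i, l i = 1}

/-- `φ(λ) = (1/2) h(λ)⁻¹ [λ] I*` where `I* = Y V*`. -/
def phiv {k : ℕ} (Y : Matrix (Fin k) (Fin k) ℝ) (Vs : Fin k → ℝ) (l : Fin k → ℝ) : Fin k → ℝ :=
  (1/2 : ℝ) • ((hmat Y l)⁻¹ *ᵥ (Matrix.diagonal l *ᵥ (Y *ᵥ Vs)))

/-- `‖x‖_{h(λ)}²  = xᵀ h(λ) x`. -/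
def qnorm {k : ℕ} (Y : Matrix (Fin k) (Fin k) ℝ) (l x : Fin k → ℝ) : ℝ :=
  x ⬝ᵥ (hmat Y l *ᵥ x)

/-- The half-space `H_λ`. -/
def Hset {k : ℕ} (Y : Matrix (Fin k) (Fin k) ℝ) (Vs : Fin k → ℝ) (l : Fin k → ℝ) :
    Set (Fin k → ℝ) :=
  {y | l ⬝ᵥ y ≤ qnorm Y l (phiv Y Vs l)}

/-- `(1/2) h(λ)⁻¹ [λ](I* + r·1)` with `I* = Y V*`. -/
def PhiD {k : ℕ} (Y : Matrix (Fin k) (Fin k) ℝ) (Vs : Fin k → ℝ) (l : Fin k → ℝ) (r : ℝ) :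
    Fin k → ℝ :=
  (1/2 : ℝ) • ((hmat Y l)⁻¹ *ᵥ (Matrix.diagonal l *ᵥ (Y *ᵥ Vs + r • (1 : Fin k → ℝ))))

lemma const_of_irred {k : ℕ} {h : Matrix (Fin k) (Fin k) ℝ} (hirr : IsIrred h)
    {u : Fin k → ℝ} (hu : ∀ i j, h i j ≠ 0 → u i = u j) : ∀ i j, u i = u j := by
  intro i0 j0
  by_contra hne
  set α : Finset (Fin k) := Finset.univ.filter (fun i => u i = u i0) with hα
  have hα1 : i0 ∈ α := by simp [hα]
  have hα2 : α ≠ Finset.univ := by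
    intro hEq
    have hmem : j0 ∈ α := by rw [hEq]; exact Finset.mem_univ j0
    have : u j0 = u i0 := by simpa [hα] using hmem
    exact hne this.symm
  obtain ⟨i, hi, j, hj, hij⟩ := hirr α ⟨i0, hα1⟩ hα2
  have h1 : u i = u j := hu i j hij
  have h2 : u i = u i0 := by simpa [hα] using hi
  have : j ∈ α := by simp [hα, ← h1, h2]
  exact (Finset.mem_compl.mp hj) this

lemma quad_id {k : ℕ} (h : Matrix (Fin k) (Fin k) ℝ) (hsym : ∀ i j, h i j = h j i)
    (x u : Fin k → ℝ) :
    (fun i => x i * u i) ⬝ᵥ (h *ᵥ fun i => x i * u i)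
      = (∑ i, u i ^ 2 * (x i * (h *ᵥ x) i))
        - (1/2) * ∑ i, ∑ j, h i j * x i * x j * (u i - u j) ^ 2 := by
  have anti : (∑ i, ∑ j, (h i j * x i * x j * (u j ^ 2 - u i ^ 2))) = 0 := by
    set f : Fin k → Fin k → ℝ := fun i j => (h i j * x i * x j * (u j ^ 2 - u i ^ 2)) with hf
    have h1 : ∑ i, ∑ j, f i j = ∑ i, ∑ j, f j i := Finset.sum_comm
    have h2 : ∀ i j, f j i = - f i j := by
      intro i j; simp only [hf]; rw [hsym j i]; ring
    have h3 : ∑ i, ∑ j, f j i = - ∑ i, ∑ j, f i j := by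
      rw [← Finset.sum_neg_distrib]
      refine Finset.sum_congr rfl fun i _ => ?_
      rw [← Finset.sum_neg_distrib]
      exact Finset.sum_congr rfl fun j _ => h2 i j
    have := h1.trans h3
    linarith
  have e1 : (fun i => x i * u i) ⬝ᵥ (h *ᵥ fun i => x i * u i)
      = ∑ i, ∑ j, h i j * x i * x j * (u i * u j) := by
    simp only [dotProduct, mulVec, dotProduct, Finset.mul_sum]
    exact Finset.sum_congr rfl fun i _ => Finset.sum_congr rfl fun j _ => by ring
  have e2 : (∑ i, u i ^ 2 * (x i * (h *ᵥ x) i)) = ∑ i, ∑ j, h i j * x i * x j * u i ^ 2 := by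
    simp only [mulVec, dotProduct, Finset.mul_sum]
    exact Finset.sum_congr rfl fun i _ => Finset.sum_congr rfl fun j _ => by ring
  have e3 : ∀ i j, h i j * x i * x j * (u i * u j)
      = h i j * x i * x j * u i ^ 2 - (1/2) * (h i j * x i * x j * (u i - u j) ^ 2)
        + (1/2) * (h i j * x i * x j * (u j ^ 2 - u i ^ 2)) := fun i j => by ring
  rw [e1, e2]
  simp_rw [e3]
  simp only [Finset.sum_add_distrib, Finset.sum_sub_distrib, ← Finset.mul_sum]
  rw [anti]
  ring

/-- An irreducible symmetric Z-matrix `h` with `h x = c ≥ 0`, `c ≠ 0`, `x > 0` is PD. -/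
lemma posdef_of {k : ℕ} {h : Matrix (Fin k) (Fin k) ℝ}
    (hsym : ∀ i j, h i j = h j i) (hZ : ∀ i j, i ≠ j → h i j ≤ 0) (hirr : IsIrred h)
    {x c : Fin k → ℝ} (hx : ∀ i, 0 < x i) (hc : ∀ i, 0 ≤ c i) (hcp : ∃ i, 0 < c i)
    (heq : h *ᵥ x = c) : h.PosDef := by
  refine Matrix.PosDef.of_dotProduct_mulVec_pos ?_ ?_
  · ext i j
    simp only [conjTranspose_apply, star_trivial]
    exact hsym j i
  · intro v hv
    have hsv : star v = v := by simp
    rw [hsv]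
    set u : Fin k → ℝ := fun i => v i / x i with hu
    have hvu : v = fun i => x i * u i := by
      funext i; rw [hu]; simp only
      rw [mul_comm, div_mul_cancel₀ _ (hx i).ne']
    have hq := quad_id h hsym x u
    rw [← hvu, heq] at hq
    rw [hq]
    have hT1 : 0 ≤ ∑ i, u i ^ 2 * (x i * c i) :=
      Finset.sum_nonneg fun i _ =>
        mul_nonneg (sq_nonneg _) (mul_nonneg (hx i).le (hc i))
    have hSterm : ∀ p ∈ Finset.univ ×ˢ Finset.univ,
        h p.1 p.2 * x p.1 * x p.2 * (u p.1 - u p.2) ^ 2 ≤ (0:ℝ) := by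
      rintro ⟨i, j⟩ -
      by_cases hij : i = j
      · subst hij; simp
      · have := hZ i j hij
        nlinarith [sq_nonneg (u i - u j), (hx i).le, (hx j).le, mul_nonneg (hx i).le (hx j).le,
          mul_nonneg (mul_nonneg (hx i).le (hx j).le) (sq_nonneg (u i - u j))]
    have hS : ∑ i, ∑ j, h i j * x i * x j * (u i - u j) ^ 2 ≤ 0 := by
      rw [← Finset.sum_product']
      exact Finset.sum_nonpos hSterm
    rcases lt_or_ge 0 (∑ i, u i ^ 2 * (x i * c i) - 1/2 * ∑ i, ∑ j, h i j * x i * x j * (u i - u j) ^ 2) with hlt | hle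
    · exact hlt
    · exfalso
      have hT1z : ∑ i, u i ^ 2 * (x i * c i) = 0 := le_antisymm (by linarith) hT1
      have hSz : ∑ i, ∑ j, h i j * x i * x j * (u i - u j) ^ 2 = 0 :=
        le_antisymm hS (by linarith)
      have hT1t : ∀ i ∈ Finset.univ, u i ^ 2 * (x i * c i) = 0 :=
        (Finset.sum_eq_zero_iff_of_nonneg (fun i _ =>
          mul_nonneg (sq_nonneg _) (mul_nonneg (hx i).le (hc i)))).mp hT1z
      have hSt : ∀ i j, h i j * x i * x j * (u i - u j) ^ 2 = 0 := by
        rw [← Finset.sum_product'] at hSz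
        have := (Finset.sum_eq_zero_iff_of_nonpos hSterm).mp hSz
        intro i j; exact this (i, j) (by simp)
      have huc : ∀ i j, h i j ≠ 0 → u i = u j := by
        intro i j hne
        have h0 := hSt i j
        have : (u i - u j) ^ 2 = 0 := by
          rcases mul_eq_zero.mp h0 with h' | h'
          · exact absurd h' (by
              intro hz
              rcases mul_eq_zero.mp hz with h'' | h''
              · rcases mul_eq_zero.mp h'' with h3 | h3
                · exact hne h3
                · exact (hx i).ne' h3
              · exact (hx j).ne' h'')
          · exact h'
        have := pow_eq_zero_iff (n := 2) (by norm_num) |>.mp this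
        linarith [sub_eq_zero.mp this]
      have hconst := const_of_irred hirr huc
      obtain ⟨i1, hi1⟩ := hcp
      have hui1 : u i1 = 0 := by
        have := hT1t i1 (Finset.mem_univ i1)
        have hxc : 0 < x i1 * c i1 := mul_pos (hx i1) hi1
        have : u i1 ^ 2 = 0 := by
          rcases mul_eq_zero.mp this with h' | h'
          · exact h'
          · exact absurd h' hxc.ne'
        exact pow_eq_zero_iff (n := 2) (by norm_num) |>.mp this
      apply hv
      funext i
      have hvi : v i = x i * u i := congrFun hvu i
      simp [hvi, hconst i i1, hui1]

/-- For a PD irreducible Z-matrix `h`, `h x = c ≥ 0`, `c ≠ 0` implies `x > 0`. -/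
lemma pos_of {k : ℕ} {h : Matrix (Fin k) (Fin k) ℝ} (hPD : h.PosDef)
    (hZ : ∀ i j, i ≠ j → h i j ≤ 0) (hirr : IsIrred h)
    {x c : Fin k → ℝ} (hc : ∀ i, 0 ≤ c i) (hcp : ∃ i, 0 < c i) (heq : h *ᵥ x = c) :
    ∀ i, 0 < x i := by
  set s : Fin k → ℝ := fun i => max (-(x i)) 0 with hs
  have hs0 : ∀ i, 0 ≤ s i := fun i => le_max_right _ _
  have hxs : ∀ i, 0 ≤ x i + s i := fun i => by
    have := le_max_left (-(x i)) 0
    simp only [hs]; linarith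
  have hmul : ∀ i, s i * (x i + s i) = 0 := fun i => by
    rcases le_total (x i) 0 with h' | h'
    · have : s i = -x i := max_eq_left (by linarith)
      rw [this]; ring
    · have : s i = 0 := max_eq_right (by linarith)
      rw [this]; ring
  have hzero : s = 0 := by
    by_contra hsne
    have hpos := hPD.dotProduct_mulVec_pos hsne
    have hsv : star s = s := by simp
    rw [hsv] at hpos
    have hsplit : s ⬝ᵥ (h *ᵥ s) = s ⬝ᵥ (h *ᵥ (fun i => x i + s i)) - s ⬝ᵥ c := by
      have hxsfun : (fun i => x i + s i) = x + s := rfl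
      rw [hxsfun, mulVec_add, dotProduct_add, ← heq]
      ring
    have h1 : s ⬝ᵥ (h *ᵥ (fun i => x i + s i)) ≤ 0 := by
      rw [dotProduct]
      apply Finset.sum_nonpos; intro i _
      have : (h *ᵥ fun i => x i + s i) i = ∑ j, h i j * (x j + s j) := rfl
      rw [this, Finset.mul_sum]
      apply Finset.sum_nonpos; intro j _
      by_cases hij : i = j
      · subst hij
        calc s i * (h i i * (x i + s i)) = h i i * (s i * (x i + s i)) := by ring
        _ = 0 := by rw [hmul i, mul_zero]
        _ ≤ 0 := le_refl _
      · have hz := hZ i j hij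
        nlinarith [hs0 i, hxs j, mul_nonneg (hs0 i) (hxs j)]
    have h2 : 0 ≤ s ⬝ᵥ c := Finset.sum_nonneg fun i _ => mul_nonneg (hs0 i) (hc i)
    linarith
  have hxnn : ∀ i, 0 ≤ x i := by
    intro i
    have h0 : s i = 0 := congrFun hzero i
    have := le_max_left (-(x i)) 0
    rw [hs] at h0
    simp only at h0
    linarith [h0 ▸ this]
  intro j
  rcases (hxnn j).lt_or_eq with h' | h'
  · exact h'
  · exfalso
    set α : Finset (Fin k) := Finset.univ.filter (fun i => x i = 0) with hα
    have hjα : j ∈ α := by simp [hα, h'.symm]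
    have hne : α ≠ Finset.univ := by
      intro hEq
      have hx0 : x = 0 := by
        funext i
        have : i ∈ α := by rw [hEq]; exact Finset.mem_univ i
        simpa [hα] using this
      obtain ⟨i1, hi1⟩ := hcp
      rw [hx0, mulVec_zero] at heq
      rw [← heq] at hi1
      simp at hi1
    obtain ⟨j', hj', i, hi, hji⟩ := hirr α ⟨j, hjα⟩ hne
    have hxj' : x j' = 0 := by simpa [hα] using hj'
    have hxi : x i ≠ 0 := by
      have := Finset.mem_compl.mp hi
      simpa [hα] using this
    have hxipos : 0 < x i := (hxnn i).lt_of_ne (Ne.symm hxi)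
    have hsum : ∑ m, h j' m * x m = c j' := by rw [← heq]; rfl
    have hterms : ∀ m ∈ Finset.univ, h j' m * x m ≤ (0:ℝ) := by
      intro m _
      by_cases hm : j' = m
      · rw [← hm, hxj', mul_zero]
      · exact mul_nonpos_iff.mpr (Or.inr ⟨hZ j' m hm, hxnn m⟩)
    have hsle : c j' ≤ 0 := hsum ▸ Finset.sum_nonpos hterms
    have hceq : (0:ℝ) = ∑ m, h j' m * x m := by rw [hsum]; linarith [hc j']
    have hall := (Finset.sum_eq_zero_iff_of_nonpos hterms).mp hceq.symm
    have hterm := hall i (Finset.mem_univ i)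
    rcases mul_eq_zero.mp hterm with h'' | h''
    · exact hji h''
    · exact hxi h''

/-- A Z-matrix with positive eigenvector `l` for eigenvalue `r` has all complex
eigenvalues with real part at least `r`. -/
lemma spec_re_ge {k : ℕ} {A : Matrix (Fin k) (Fin k) ℝ}
    (hZ : ∀ i j, i ≠ j → A i j ≤ 0) {l : Fin k → ℝ} (hl : ∀ i, 0 < l i) {r : ℝ}
    (heig : A *ᵥ l = r • l) : ∀ μ ∈ spectrum ℂ (A.map (Complex.ofReal)), r ≤ μ.re := by
  intro μ hμ
  -- convert to eigenvalue of toLin'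
  have hev : Module.End.HasEigenvalue (Matrix.toLin' (A.map (Complex.ofReal))) μ := by
    rw [← Matrix.toLin_eq_toLin']
    rw [Module.End.hasEigenvalue_iff_mem_spectrum]
    rw [show Matrix.toLin (Pi.basisFun ℂ (Fin k)) (Pi.basisFun ℂ (Fin k)) (A.map Complex.ofReal)
        = Matrix.toLinAlgEquiv (Pi.basisFun ℂ (Fin k)) (A.map Complex.ofReal) from rfl]
    rwa [AlgEquiv.spectrum_eq (Matrix.toLinAlgEquiv <| Pi.basisFun ℂ (Fin k))]
  obtain ⟨v, hv_mem, hv_ne⟩ := hev.exists_hasEigenvector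
  have hvec : (A.map (Complex.ofReal)) *ᵥ v = μ • v := by
    have := Module.End.mem_eigenspace_iff.mp hv_mem
    rwa [Matrix.toLin'_apply] at this
  -- conjugated matrix B
  set B : Matrix (Fin k) (Fin k) ℂ :=
    Matrix.of (fun i j => (((l i)⁻¹ * A i j * l j : ℝ) : ℂ)) with hB
  set w : Fin k → ℂ := fun i => (((l i)⁻¹ : ℝ) : ℂ) * v i with hw
  have hwne : w ≠ 0 := by
    intro h0
    apply hv_ne
    funext i
    have hwi : (((l i)⁻¹ : ℝ) : ℂ) * v i = 0 := congrFun h0 i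
    have hlne : (((l i)⁻¹ : ℝ) : ℂ) ≠ 0 := by
      simp only [ne_eq, Complex.ofReal_eq_zero]
      exact inv_ne_zero (hl i).ne'
    have := (mul_eq_zero.mp hwi).resolve_left hlne
    simpa using this
  have hBw : B *ᵥ w = μ • w := by
    funext i
    have hAv : ∑ j, ((A i j : ℂ)) * v j = μ * v i := by
      have := congrFun hvec i
      simpa [Matrix.mulVec, dotProduct, Matrix.map_apply] using this
    have : (B *ᵥ w) i = ∑ j, (((l i)⁻¹ : ℝ) : ℂ) * ((A i j : ℂ)) * v j := by
      simp only [Matrix.mulVec, dotProduct, hB, hw, Matrix.of_apply]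
      refine Finset.sum_congr rfl fun j _ => ?_
      have hlj : ((l j : ℝ) : ℂ) ≠ 0 := Complex.ofReal_ne_zero.mpr (hl j).ne'
      have hc : ((l j : ℝ) : ℂ) * (((l j : ℝ) : ℂ))⁻¹ = 1 := mul_inv_cancel₀ hlj
      push_cast
      linear_combination (((l i : ℝ) : ℂ))⁻¹ * ((A i j : ℝ) : ℂ) * v j * hc
    rw [this]
    simp only [Pi.smul_apply, hw, smul_eq_mul]
    simp_rw [mul_assoc]
    rw [← Finset.mul_sum, hAv]
    ring
  have hevB : Module.End.HasEigenvalue (Matrix.toLin' B) μ := by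
    apply Module.End.hasEigenvalue_of_hasEigenvector (x := w)
    constructor
    · rw [Module.End.mem_eigenspace_iff, Matrix.toLin'_apply, hBw]
    · exact hwne
  obtain ⟨i, hball⟩ := eigenvalue_mem_ball hevB
  -- compute diagonal and radius
  have hdiag : B i i = (A i i : ℂ) := by
    simp only [hB, Matrix.of_apply]
    rw [mul_comm ((l i)⁻¹) (A i i), mul_assoc, inv_mul_cancel₀ (hl i).ne', mul_one]
  have hrowsum : ∑ j, A i j * l j = r * l i := by
    have := congrFun heig i
    simpa [Matrix.mulVec, dotProduct] using this
  have hrad : (∑ j ∈ Finset.univ.erase i, ‖B i j‖) = A i i - r := by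
    have hterm : ∀ j ∈ Finset.univ.erase i, ‖B i j‖ = (l i)⁻¹ * (-(A i j * l j)) := by
      intro j hj
      have hji : j ≠ i := Finset.ne_of_mem_erase hj
      have hA : A i j ≤ 0 := hZ i j (Ne.symm hji)
      have h1 : 0 ≤ (l i)⁻¹ := (inv_pos.mpr (hl i)).le
      have h2 : A i j * l j ≤ 0 := mul_nonpos_iff.mpr (Or.inr ⟨hA, (hl j).le⟩)
      have h5 : (l i)⁻¹ * A i j * l j ≤ 0 := by
        rw [mul_assoc]; exact mul_nonpos_iff.mpr (Or.inl ⟨h1, h2⟩)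
      simp only [hB, Matrix.of_apply, Complex.norm_real, Real.norm_eq_abs]
      rw [abs_of_nonpos h5]
      ring
    rw [Finset.sum_congr rfl hterm]
    rw [← Finset.mul_sum, Finset.sum_neg_distrib]
    rw [Finset.sum_erase_eq_sub (Finset.mem_univ i), hrowsum]
    field_simp [(hl i).ne']
    ring
  rw [Metric.mem_closedBall, hdiag, hrad, Complex.dist_eq] at hball
  have hre : (A i i : ℝ) - μ.re ≤ A i i - r := by
    have h2 : ((A i i : ℂ) - μ).re ≤ ‖(A i i : ℂ) - μ‖ :=
      le_trans (le_abs_self _) (Complex.abs_re_le_norm _)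
    have h3 : ‖(A i i : ℂ) - μ‖ = ‖μ - (A i i : ℂ)‖ :=
      norm_sub_rev _ _
    have h4 : ((A i i : ℂ) - μ).re = (A i i : ℝ) - μ.re := by simp
    rw [← h4]
    calc ((A i i : ℂ) - μ).re ≤ ‖(A i i : ℂ) - μ‖ := h2
      _ = ‖μ - (A i i : ℂ)‖ := h3
      _ ≤ A i i - r := hball
  linarith

lemma hmat_apply {k : ℕ} (Y : Matrix (Fin k) (Fin k) ℝ) (l : Fin k → ℝ) (i j : Fin k) :
    hmat Y l i j = 1/2 * (l i * Y i j + Y i j * l j) := by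
  simp [hmat, Matrix.smul_apply, Matrix.add_apply, Matrix.diagonal_mul, Matrix.mul_diagonal]

lemma negJT_apply {k : ℕ} (Y : Matrix (Fin k) (Fin k) ℝ) (hYs : ∀ i j, Y i j = Y j i)
    (Vs x : Fin k → ℝ) (i j : Fin k) :
    (-(Jmat Y Vs x))ᵀ i j = x j * Y i j - (if i = j then (Y *ᵥ (Vs - x)) i else 0) := by
  simp only [Matrix.transpose_apply, Matrix.neg_apply, Jmat, Matrix.sub_apply,
    Matrix.diagonal_apply, Matrix.diagonal_mul]
  rw [hYs j i]
  by_cases h : i = j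
  · subst h; simp only [if_pos rfl]; ring
  · rw [if_neg (Ne.symm h), if_neg h]; ring

lemma key_id {k : ℕ} (Y : Matrix (Fin k) (Fin k) ℝ) (hYs : ∀ i j, Y i j = Y j i)
    (Vs x l : Fin k → ℝ) (r : ℝ) (i : Fin k) :
    ((-(Jmat Y Vs x))ᵀ *ᵥ l) i - r * l i
      = 2 * ((hmat Y l *ᵥ x) i) - l i * ((Y *ᵥ Vs) i + r) := by
  have hAl : ((-(Jmat Y Vs x))ᵀ *ᵥ l) i
      = (∑ j, Y i j * l j * x j) - ((Y *ᵥ Vs) i - (Y *ᵥ x) i) * l i := by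
    have e : ∀ j, (-(Jmat Y Vs x))ᵀ i j * l j
        = Y i j * l j * x j - (if i = j then ((Y *ᵥ Vs) i - (Y *ᵥ x) i) * l j else 0) := by
      intro j
      rw [negJT_apply Y hYs Vs x i j]
      have hd : (Y *ᵥ (Vs - x)) i = (Y *ᵥ Vs) i - (Y *ᵥ x) i := by
        rw [Matrix.mulVec_sub]; rfl
      by_cases h : i = j
      · rw [if_pos h, if_pos h, hd]; ring
      · rw [if_neg h, if_neg h]; ring
    show (∑ j, (-(Jmat Y Vs x))ᵀ i j * l j) = _
    rw [Finset.sum_congr rfl (fun j _ => e j), Finset.sum_sub_distrib]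
    congr 1
    rw [Finset.sum_ite_eq Finset.univ i (fun j => ((Y *ᵥ Vs) i - (Y *ᵥ x) i) * l j)]
    simp
  have hhx : (hmat Y l *ᵥ x) i
      = 1/2 * (l i * (Y *ᵥ x) i) + 1/2 * (∑ j, Y i j * l j * x j) := by
    have e : ∀ j, hmat Y l i j * x j
        = 1/2 * (l i * (Y i j * x j)) + 1/2 * (Y i j * l j * x j) := by
      intro j; rw [hmat_apply]; ring
    show (∑ j, hmat Y l i j * x j) = _
    rw [Finset.sum_congr rfl (fun j _ => e j), Finset.sum_add_distrib]
    simp only [← Finset.mul_sum]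
    rfl
  rw [hAl, hhx]
  ring

theorem stmt_7 (n : ℕ) (hn : 1 ≤ n)
    (Y : Matrix (Fin n) (Fin n) ℝ)
    (hPD : Y.PosDef)
    (hZ : IsZmat Y)
    (hirr : IsIrred Y)
    (Vs : Fin n → ℝ) (hVs : ∀ i, 0 < Vs i)
    (hInn : ∀ i, 0 ≤ (Y *ᵥ Vs) i) (hIne : Y *ᵥ Vs ≠ 0)
    (r : ℝ) (hr : 0 ≤ r) (l : Fin n → ℝ) (hl : ∀ i, 0 < l i) (x : Fin n → ℝ) :
    ((IsIrred (-(Jmat Y Vs x))ᵀ ∧ IsMmat (-(Jmat Y Vs x))ᵀ ∧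
        (-(Jmat Y Vs x))ᵀ *ᵥ l = r • l) ↔
      ((hmat Y l).PosDef ∧ x = PhiD Y Vs l r)) ∧
    (((hmat Y l).PosDef ∧ x = PhiD Y Vs l r) → ∀ i, 0 < x i) := by
  -- symmetry of Y
  have hYs : ∀ i j, Y i j = Y j i := by
    intro i j
    have := congrFun (congrFun hPD.1 i) j
    simpa [Matrix.conjTranspose_apply] using this.symm
  set c : Fin n → ℝ := fun i => l i * ((Y *ᵥ Vs) i + r) with hc
  have hcnn : ∀ i, 0 ≤ c i := fun i =>
    mul_nonneg (hl i).le (by linarith [hInn i])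
  have hcpos : ∃ i, 0 < c i := by
    obtain ⟨i, hi⟩ := Function.ne_iff.mp hIne
    refine ⟨i, mul_pos (hl i) ?_⟩
    have := (hInn i).lt_of_ne (Ne.symm hi)
    linarith
  have hc2 : ∀ i, 0 ≤ ((1/2 : ℝ) • c) i := fun i => by
    have := hcnn i
    simp only [Pi.smul_apply, smul_eq_mul]
    linarith
  have hcp2 : ∃ i, 0 < ((1/2 : ℝ) • c) i := by
    obtain ⟨i, hi⟩ := hcpos
    exact ⟨i, by simp only [Pi.smul_apply, smul_eq_mul]; linarith⟩
  -- hmat properties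
  have hhs : ∀ i j, hmat Y l i j = hmat Y l j i := by
    intro i j; rw [hmat_apply, hmat_apply, hYs i j]; ring
  have hhZ : ∀ i j, i ≠ j → hmat Y l i j ≤ 0 := by
    intro i j hij
    rw [hmat_apply]
    have h1 := hZ i j hij
    have h2 := hl i
    have h3 := hl j
    nlinarith
  have hhirr : IsIrred (hmat Y l) := by
    intro α h1 h2
    obtain ⟨i, hi, j, hj, hY⟩ := hirr α h1 h2
    refine ⟨i, hi, j, hj, ?_⟩
    rw [hmat_apply]
    intro h0
    apply hY
    have h0' : (l i + l j) * Y i j = 0 := by linear_combination 2 * h0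
    rcases mul_eq_zero.mp h0' with h' | h'
    · exact absurd h' (add_pos (hl i) (hl j)).ne'
    · exact h'
  -- the eigen-equation is equivalent to the linear system
  have heigiff : (-(Jmat Y Vs x))ᵀ *ᵥ l = r • l ↔ hmat Y l *ᵥ x = (1/2 : ℝ) • c := by
    constructor
    · intro he
      funext i
      have h1 := congrFun he i
      have h2 := key_id Y hYs Vs x l r i
      simp only [Pi.smul_apply, smul_eq_mul] at h1 ⊢
      rw [h1] at h2
      simp only [hc]
      linarith
    · intro he
      funext i
      have h1 := congrFun he i
      have h2 := key_id Y hYs Vs x l r i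
      simp only [Pi.smul_apply, smul_eq_mul, hc] at h1
      simp only [Pi.smul_apply, smul_eq_mul]
      rw [h1] at h2
      linarith
  -- diagonal computation for PhiD
  have hcdiag : Matrix.diagonal l *ᵥ (Y *ᵥ Vs + r • (1 : Fin n → ℝ)) = c := by
    funext i
    rw [Matrix.mulVec_diagonal]
    simp [hc]
  -- PhiD and the linear system
  have hPhiD_of : (hmat Y l).PosDef → (x = PhiD Y Vs l r ↔ hmat Y l *ᵥ x = (1/2 : ℝ) • c) := by
    intro hhPD
    have hdet : IsUnit (hmat Y l).det := isUnit_iff_ne_zero.mpr hhPD.det_pos.ne'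
    constructor
    · intro hx
      rw [hx]
      show hmat Y l *ᵥ ((1/2 : ℝ) • ((hmat Y l)⁻¹ *ᵥ (Matrix.diagonal l *ᵥ (Y *ᵥ Vs + r • (1 : Fin n → ℝ))))) = _
      rw [hcdiag, Matrix.mulVec_smul, Matrix.mulVec_mulVec, Matrix.mul_nonsing_inv _ hdet,
        Matrix.one_mulVec]
    · intro he
      show x = (1/2 : ℝ) • ((hmat Y l)⁻¹ *ᵥ (Matrix.diagonal l *ᵥ (Y *ᵥ Vs + r • (1 : Fin n → ℝ))))
      rw [hcdiag, ← Matrix.mulVec_smul, ← he, Matrix.mulVec_mulVec,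
        Matrix.nonsing_inv_mul _ hdet, Matrix.one_mulVec]
  -- A is Z-matrix and irreducible when x > 0
  have hAZ_of : (∀ i, 0 < x i) → IsZmat (-(Jmat Y Vs x))ᵀ := by
    intro hx i j hij
    rw [negJT_apply Y hYs Vs x i j, if_neg hij, sub_zero]
    exact mul_nonpos_iff.mpr (Or.inl ⟨(hx j).le, hZ i j hij⟩)
  have hAirr_of : (∀ i, 0 < x i) → IsIrred (-(Jmat Y Vs x))ᵀ := by
    intro hx α h1 h2
    obtain ⟨i, hi, j, hj, hY⟩ := hirr α h1 h2
    have hij : i ≠ j := by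
      intro hEq
      exact (Finset.mem_compl.mp hj) (hEq ▸ hi)
    refine ⟨i, hi, j, hj, ?_⟩
    rw [negJT_apply Y hYs Vs x i j, if_neg hij, sub_zero]
    exact mul_ne_zero (hx j).ne' hY
  -- backward: PosDef + x = PhiD implies x > 0
  have hback : ((hmat Y l).PosDef ∧ x = PhiD Y Vs l r) → ∀ i, 0 < x i := by
    rintro ⟨hhPD, hx⟩
    exact pos_of hhPD hhZ hhirr hc2 hcp2 ((hPhiD_of hhPD).mp hx)
  refine ⟨⟨?_, ?_⟩, hback⟩
  · -- forward direction
    rintro ⟨hAirr, ⟨hAZ, _⟩, heig⟩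
    have heq : hmat Y l *ᵥ x = (1/2 : ℝ) • c := heigiff.mp heig
    have hxpos : ∀ i, 0 < x i := by
      by_cases h2 : 2 ≤ n
      · intro j
        have : Nontrivial (Fin n) := Fin.nontrivial_iff_two_le.mpr h2
        obtain ⟨i0, hi0⟩ := exists_ne j
        have hαne : ({j}ᶜ : Finset (Fin n)).Nonempty :=
          ⟨i0, Finset.mem_compl.mpr (by simp [hi0])⟩
        have hαuniv : ({j}ᶜ : Finset (Fin n)) ≠ Finset.univ := by
          intro hEq
          have : j ∈ ({j}ᶜ : Finset (Fin n)) := by rw [hEq]; exact Finset.mem_univ j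
          simp at this
        obtain ⟨i, hi, j', hj', hA0⟩ := hAirr _ hαne hαuniv
        have hj'j : j' = j := by simpa using hj'
        subst hj'j
        have hij : i ≠ j' := by simpa using hi
        rw [negJT_apply Y hYs Vs x i j', if_neg hij, sub_zero] at hA0
        have hle := hAZ i j' hij
        rw [negJT_apply Y hYs Vs x i j', if_neg hij, sub_zero] at hle
        have hYij := hZ i j' hij
        by_contra hxle
        push_neg at hxle
        apply hA0
        have : 0 ≤ x j' * Y i j' := mul_nonneg_iff.mpr (Or.inr ⟨hxle, hYij⟩)
        linarith
      · have hn1 : n = 1 := by omega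
        subst hn1
        intro j
        have hj0 : j = 0 := Fin.fin_one_eq_zero j
        subst hj0
        have h0 := congrFun heq 0
        have hL : (hmat Y l *ᵥ x) 0 = hmat Y l 0 0 * x 0 := by
          show (∑ m, hmat Y l 0 m * x m) = _
          rw [Fin.sum_univ_one]
        have hm00 : hmat Y l 0 0 = l 0 * Y 0 0 := by rw [hmat_apply]; ring
        have hYV0 : 0 < (Y *ᵥ Vs) 0 := by
          obtain ⟨i, hi⟩ := Function.ne_iff.mp hIne
          have hi0 : i = 0 := Fin.fin_one_eq_zero i
          subst hi0
          exact (hInn 0).lt_of_ne (Ne.symm hi)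
        have hY00 : 0 < Y 0 0 := by
          have hYV : (Y *ᵥ Vs) 0 = Y 0 0 * Vs 0 := by
            show (∑ m, Y 0 m * Vs m) = _
            rw [Fin.sum_univ_one]
          nlinarith [hVs 0]
        rw [hL, hm00] at h0
        simp only [Pi.smul_apply, smul_eq_mul, hc] at h0
        nlinarith [hl 0, mul_pos (hl 0) hY00, hYV0]
    have hhPD : (hmat Y l).PosDef := posdef_of hhs hhZ hhirr hxpos hc2 hcp2 heq
    exact ⟨hhPD, (hPhiD_of hhPD).mpr heq⟩
  · -- backward direction
    rintro ⟨hhPD, hx⟩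
    have heq : hmat Y l *ᵥ x = (1/2 : ℝ) • c := (hPhiD_of hhPD).mp hx
    have hxpos : ∀ i, 0 < x i := pos_of hhPD hhZ hhirr hc2 hcp2 heq
    have heig : (-(Jmat Y Vs x))ᵀ *ᵥ l = r • l := heigiff.mpr heq
    refine ⟨hAirr_of hxpos, ⟨hAZ_of hxpos, ?_⟩, heig⟩
    intro μ hμ
    have := spec_re_ge (hAZ_of hxpos) hl heig μ hμ
    linarith
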